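/- Let V be a real inner product space with orthogonal complex structure J and R a curvature-type tensor. Let H(X) = R(X,JX,JX,X) denote the holomorphic sectional curvature of a unit vector X. Suppose for every orthonormal antiholomorphic pair {x,y} (unit, orthogonal, with x ⊥ Jy) we have R(x,Jx,Jx,y) + R(x,Jx,Jy,x) = 0. Then for every such pair, H(x) = H(y). -/

import Mathlib

open scoped RealInnerProductSpace

/-- Lemma 2 (key step): if `R(x,Jx,Jx,y) + R(x,Jx,Jy,x) = 0` for every orthonormal
antiholomorphic pair, then `H(x) = H(y)` for every such pair,
where `H(X) = R(X,JX,JX,X)`. -/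
theorem holomorphic_sectional_curvature_eq_of_antihol_identity
    {V : Type*} [NormedAddCommGroup V] [InnerProductSpace ℝ V]
    (J : V →ₗ[ℝ] V) (hJ2 : ∀ X : V, J (J X) = -X)
    (hJg : ∀ X Y : V, ⟪J X, J Y⟫ = ⟪X, Y⟫)
    (R : V →ₗ[ℝ] V →ₗ[ℝ] V →ₗ[ℝ] V →ₗ[ℝ] ℝ)
    (hR1 : ∀ X Y Z W : V, R X Y Z W = - R Y X Z W)
    (hR2 : ∀ X Y Z W : V, R X Y Z W = - R X Y W Z)
    (hR3 : ∀ X Y Z W : V, R X Y Z W = R Z W X Y)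
    (hB : ∀ X Y Z W : V, R X Y Z W + R Y Z X W + R Z X Y W = 0)
    (h : ∀ x y : V, ‖x‖ = 1 → ‖y‖ = 1 → ⟪x, y⟫ = 0 → ⟪x, J y⟫ = 0 →
      R x (J x) (J x) y + R x (J x) (J y) x = 0) :
    ∀ x y : V, ‖x‖ = 1 → ‖y‖ = 1 → ⟪x, y⟫ = 0 → ⟪x, J y⟫ = 0 →
      R x (J x) (J x) x = R y (J y) (J y) y := by
  -- basic inner-product facts
  have hJself : ∀ z : V, ⟪z, J z⟫ = 0 := by
    intro z
    have h1 := hJg z (J z)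
    rw [hJ2, inner_neg_right, real_inner_comm (J z) z] at h1
    rw [real_inner_comm]
    linarith
  have hJswap : ∀ u v : V, ⟪u, J v⟫ = - ⟪v, J u⟫ := by
    intro u v
    have h1 := hJg v (J u)
    rw [hJ2, inner_neg_right] at h1
    have h2 : ⟪u, J v⟫ = ⟪J v, u⟫ := (real_inner_comm u (J v)).symm
    linarith
  -- version of `h` for equal (not necessarily unit) norms
  have h' : ∀ u v : V, ‖u‖ = ‖v‖ → ⟪u, v⟫ = 0 → ⟪u, J v⟫ = 0 →
      R u (J u) (J u) v + R u (J u) (J v) u = 0 := by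
    intro u v he ho hoJ
    rcases eq_or_ne ‖u‖ 0 with h0 | h0
    · have hu : u = 0 := norm_eq_zero.mp h0
      simp [hu]
    · set c : ℝ := ‖u‖ with hc
      have hcpos : 0 < c := lt_of_le_of_ne (norm_nonneg u) (Ne.symm h0)
      have hcne : c ≠ 0 := ne_of_gt hcpos
      have hu1 : ‖c⁻¹ • u‖ = 1 := by
        rw [norm_smul, Real.norm_eq_abs, abs_inv, abs_of_pos hcpos]
        field_simp
        exact hc.symm
      have hv1 : ‖c⁻¹ • v‖ = 1 := by
        rw [norm_smul, Real.norm_eq_abs, abs_inv, abs_of_pos hcpos, ← he]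
        field_simp
      have ho1 : ⟪c⁻¹ • u, c⁻¹ • v⟫ = 0 := by
        rw [real_inner_smul_left, real_inner_smul_right, ho]; ring
      have ho2 : ⟪c⁻¹ • u, J (c⁻¹ • v)⟫ = 0 := by
        rw [map_smul, real_inner_smul_left, real_inner_smul_right, hoJ]; ring
      have e := h (c⁻¹ • u) (c⁻¹ • v) hu1 hv1 ho1 ho2
      simp only [map_smul, LinearMap.smul_apply, smul_eq_mul] at e
      have e2 : (c⁻¹)^4 * (R u (J u) (J u) v + R u (J u) (J v) u) = 0 := by
        linear_combination e
      have h4 : (c⁻¹ : ℝ)^4 ≠ 0 := pow_ne_zero _ (inv_ne_zero hcne)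
      exact (mul_eq_zero.mp e2).resolve_left h4
  intro x y hx hy ho hoJ
  have hyx : ⟪y, x⟫ = 0 := by rw [real_inner_comm]; exact ho
  have hyJx : ⟪y, J x⟫ = 0 := by rw [hJswap y x, hoJ]; ring
  have hxJx : ⟪x, J x⟫ = 0 := hJself x
  have hyJy : ⟪y, J y⟫ = 0 := hJself y
  -- the three instances of the hypothesis
  have hxy := h x y hx hy ho hoJ
  have hyx' := h y x hy hx hyx hyJx
  have hnormsq : ‖x + y‖ = ‖y - x‖ := by
    have h1 : ‖x + y‖^2 = (2:ℝ) := by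
      rw [norm_add_sq_real, hx, hy, ho]; ring
    have h2 : ‖y - x‖^2 = (2:ℝ) := by
      rw [norm_sub_sq_real, hx, hy, hyx]; ring
    rw [← Real.sqrt_sq (norm_nonneg (x+y)), ← Real.sqrt_sq (norm_nonneg (y-x)), h1, h2]
  have hinner1 : ⟪x + y, y - x⟫ = 0 := by
    rw [inner_sub_right, inner_add_left, inner_add_left,
      real_inner_self_eq_norm_sq, real_inner_self_eq_norm_sq, hx, hy, ho, hyx]
    ring
  have hinner2 : ⟪x + y, J (y - x)⟫ = 0 := by
    rw [map_sub, inner_sub_right, inner_add_left, inner_add_left, hoJ, hyJy, hxJx, hyJx]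
    ring
  have hkey := h' (x + y) (y - x) hnormsq hinner1 hinner2
  simp only [map_add, map_sub, LinearMap.add_apply, LinearMap.sub_apply] at hkey
  linear_combination (-1 : ℝ) * hxy + hyx' + (-1/2 : ℝ) * hkey
    + hR2 x (J x) x (J y) - hR3 x (J x) x (J y)
    + hR2 x (J x) (J x) y
    - hR1 x (J x) y (J x) - hR1 x (J x) y (J y) + hR2 x (J x) y (J y)
    - hR2 x (J y) x (J x)
    + hR2 x (J y) y (J y) - hR3 x (J y) y (J y)
    + hR3 (J x) x y (J x) + hR3 (J x) x y (J y)
    - hR2 (J x) y y (J y) + hR3 (J x) y y (J y)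
    + hR1 (J x) y (J y) y
    - hR2 y (J y) x (J y)
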